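/- The inequality δp ≥ θ̄·δB̲·z⁺ + θ̲·δB̄·z⁻ is facet-defining for P = conv(P₀ ∪ P₁ ∪ P₂): it is valid on P and tight at the four affinely independent extreme points (0,0,0,θ̲,0), (0,0,0,θ̄,0), (1,1,0,θ̄,θ̄·δB̲), and (1,0,1,θ̲,θ̲·δB̄). -/
import Mathlib


abbrev Pt := ℝ × ℝ × ℝ × ℝ × ℝ

def P0 (tl tu : ℝ) : Set Pt :=
  {p | p.1 = 0 ∧ p.2.1 = 0 ∧ p.2.2.1 = 0 ∧ p.2.2.2.2 = 0 ∧ tl ≤ p.2.2.2.1 ∧ p.2.2.2.1 ≤ tu}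

def P1 (tu bl bu : ℝ) : Set Pt :=
  {p | p.1 = 1 ∧ p.2.1 = 1 ∧ p.2.2.1 = 0 ∧ 0 ≤ p.2.2.2.1 ∧ p.2.2.2.1 ≤ tu ∧
    bl * p.2.2.2.1 ≤ p.2.2.2.2 ∧ p.2.2.2.2 ≤ bu * p.2.2.2.1}

def P2 (tl bl bu : ℝ) : Set Pt :=
  {p | p.1 = 1 ∧ p.2.1 = 0 ∧ p.2.2.1 = 1 ∧ tl ≤ p.2.2.2.1 ∧ p.2.2.2.1 ≤ 0 ∧
    bu * p.2.2.2.1 ≤ p.2.2.2.2 ∧ p.2.2.2.2 ≤ bl * p.2.2.2.1}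

theorem stmt_17 (tl tu bl bu : ℝ) (h1 : tl < 0) (h2 : 0 < tu) (h3 : bl < 0) (h4 : 0 < bu) :
    (∀ p ∈ convexHull ℝ (P0 tl tu ∪ P1 tu bl bu ∪ P2 tl bl bu),
      p.2.2.2.2 ≥ tu * bl * p.2.1 + tl * bu * p.2.2.1) ∧
    (∀ p ∈ ({((0:ℝ),(0:ℝ),(0:ℝ),tl,(0:ℝ)), ((0:ℝ),(0:ℝ),(0:ℝ),tu,(0:ℝ)),
        ((1:ℝ),(1:ℝ),(0:ℝ),tu,tu*bl), ((1:ℝ),(0:ℝ),(1:ℝ),tl,tl*bu)} : Set Pt),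
      p.2.2.2.2 = tu * bl * p.2.1 + tl * bu * p.2.2.1) ∧
    AffineIndependent ℝ
      ![(((0:ℝ),(0:ℝ),(0:ℝ),tl,(0:ℝ)) : Pt), ((0:ℝ),(0:ℝ),(0:ℝ),tu,(0:ℝ)),
        ((1:ℝ),(1:ℝ),(0:ℝ),tu,tu*bl), ((1:ℝ),(0:ℝ),(1:ℝ),tl,tl*bu)] := by
  refine ⟨?_, ?_, ?_⟩
  · -- validity
    have hlin : IsLinearMap ℝ (fun p : Pt => p.2.2.2.2 - tu * bl * p.2.1 - tl * bu * p.2.2.1) := by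
      constructor
      · intro x y; simp [Prod.fst_add, Prod.snd_add]; ring
      · intro c x; simp [Prod.smul_fst, Prod.smul_snd, smul_eq_mul]; ring
    have hconv : Convex ℝ {p : Pt | (fun p : Pt =>
        p.2.2.2.2 - tu * bl * p.2.1 - tl * bu * p.2.2.1) p ≥ 0} :=
      convex_halfSpace_ge hlin 0
    intro p hp
    have hsub : P0 tl tu ∪ P1 tu bl bu ∪ P2 tl bl bu ⊆
        {p : Pt | (fun p : Pt => p.2.2.2.2 - tu * bl * p.2.1 - tl * bu * p.2.2.1) p ≥ 0} := by
      rintro q ((⟨_, h2', h3', h4', _, _⟩ | ⟨_, h2', h3', _, h5', h6', _⟩) |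
        ⟨_, h2', h3', h4', _, h6', _⟩)
      · simp only [Set.mem_setOf_eq, h2', h3', h4']; nlinarith
      · simp only [Set.mem_setOf_eq, h2', h3']
        nlinarith [mul_le_mul_of_nonpos_left h5' (le_of_lt h3)]
      · simp only [Set.mem_setOf_eq, h2', h3']
        nlinarith [mul_le_mul_of_nonneg_left h4' (le_of_lt h4)]
    have := convexHull_min hsub hconv hp
    simp only [Set.mem_setOf_eq] at this
    linarith
  · -- tightness
    intro p hp
    rcases hp with h | h | h | h <;> subst h <;> simp
  · -- affine independence
    rw [affineIndependent_iff]
    intro s w hw hcomb i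
    have hmem : ∀ j : Fin 4, (if j ∈ s then w j else 0) = (if j ∈ s then w j else 0) := fun _ => rfl
    -- extend weights by zero
    set W : Fin 4 → ℝ := fun j => if j ∈ s then w j else 0 with hW
    have hsum : W 0 + W 1 + W 2 + W 3 = 0 := by
      have : ∑ j, W j = 0 := by
        rw [Finset.sum_ite_mem, Finset.univ_inter]; exact hw
      simpa [Fin.sum_univ_four] using this
    have hcomb' : W 0 • (((0:ℝ),(0:ℝ),(0:ℝ),tl,(0:ℝ)) : Pt) + W 1 • (((0:ℝ),(0:ℝ),(0:ℝ),tu,(0:ℝ)) : Pt)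
        + W 2 • (((1:ℝ),(1:ℝ),(0:ℝ),tu,tu*bl) : Pt) + W 3 • (((1:ℝ),(0:ℝ),(1:ℝ),tl,tl*bu) : Pt) = 0 := by
      have heq : ∑ j, W j • (![(((0:ℝ),(0:ℝ),(0:ℝ),tl,(0:ℝ)) : Pt), ((0:ℝ),(0:ℝ),(0:ℝ),tu,(0:ℝ)),
          ((1:ℝ),(1:ℝ),(0:ℝ),tu,tu*bl), ((1:ℝ),(0:ℝ),(1:ℝ),tl,tl*bu)]) j = 0 := by
        rw [show (∑ j, W j • _) = ∑ j ∈ Finset.univ ∩ s,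
            w j • (![(((0:ℝ),(0:ℝ),(0:ℝ),tl,(0:ℝ)) : Pt), ((0:ℝ),(0:ℝ),(0:ℝ),tu,(0:ℝ)),
            ((1:ℝ),(1:ℝ),(0:ℝ),tu,tu*bl), ((1:ℝ),(0:ℝ),(1:ℝ),tl,tl*bu)]) j from by
          rw [← Finset.sum_ite_mem]
          exact Finset.sum_congr rfl (fun j _ => by by_cases h : j ∈ s <;> simp [hW, h])]
        rw [Finset.univ_inter]; exact hcomb
      rw [Fin.sum_univ_four] at heq
      simpa using heq
    simp only [Prod.smul_mk, smul_eq_mul, Prod.mk_add_mk, Prod.mk_eq_zero,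
      Prod.ext_iff, Prod.fst_add, Prod.snd_add, Prod.fst_zero, Prod.snd_zero] at hcomb'
    obtain ⟨e1, e2, e3, e4, e5⟩ := hcomb'
    have hW2 : W 2 = 0 := by linarith [e2]
    have hW3 : W 3 = 0 := by linarith [e3]
    have h5 : (tl - tu) * W 0 = 0 := by linear_combination e4 - tu * hsum + (tu - tl) * hW3
    have hW0 : W 0 = 0 :=
      (mul_eq_zero.mp h5).resolve_left (sub_ne_zero.mpr (ne_of_lt (h1.trans h2)))
    have hW1 : W 1 = 0 := by linarith [hsum, hW0, hW2, hW3]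
    intro hi
    have hWi : W i = 0 := by fin_cases i <;> assumption
    simpa [hW, hi] using hWi
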